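/- If ξ₁ is a Busemann point of (X₁,d₁) and ξ₂ is a Busemann point of (X₂,d₂), both proper geodesic metric spaces, and c ∈ [−∞,+∞], then the function [ξ₁,ξ₂,c](x₁,x₂) := max(ξ₁(x₁) + min(c,0), ξ₂(x₂) − max(c,0)) is a Busemann point of the ℓ∞-product (X₁ × X₂, max(d₁,d₂)). -/

import Mathlib

open Set Filter Topology

/-- A metric space is geodesic if any two points are joined by a geodesic segment. -/
def GeodesicSpace (X : Type*) [MetricSpace X] : Prop :=
  ∀ x y : X, ∃ γ : ℝ → X, γ 0 = x ∧ γ (dist x y) = y ∧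
    ∀ s ∈ Set.Icc (0:ℝ) (dist x y), ∀ t ∈ Set.Icc (0:ℝ) (dist x y),
      dist (γ s) (γ t) = |s - t|

/-- `ξ` is a horofunction of `X` with base-point `b`. -/
def IsHorofunction {X : Type*} [MetricSpace X] (b : X) (ξ : X → ℝ) : Prop :=
  ∃ z : ℕ → X, Tendsto (fun n => dist b (z n)) atTop atTop ∧
    ∀ x : X, Tendsto (fun n => dist x (z n) - dist b (z n)) atTop (𝓝 (ξ x))

/-- `γ : T → X` is an almost-geodesic. -/
def IsAlmostGeodesic {X : Type*} [MetricSpace X] (T : Set ℝ) (γ : ℝ → X) : Prop :=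
  0 ∈ T ∧ T ⊆ Set.Ici (0:ℝ) ∧ ¬ BddAbove T ∧
  ∀ ε > (0:ℝ), ∃ N : ℝ, ∀ s ∈ T, ∀ t ∈ T, N ≤ s → s ≤ t →
    |dist (γ 0) (γ s) + dist (γ s) (γ t) - t| < ε

/-- `ξ` is a Busemann point: a horofunction which is the limit of an almost-geodesic. -/
def IsBusemann {X : Type*} [MetricSpace X] (b : X) (ξ : X → ℝ) : Prop :=
  IsHorofunction b ξ ∧ ∃ T : Set ℝ, ∃ γ : ℝ → X, IsAlmostGeodesic T γ ∧
    ∀ x : X, Tendsto (fun t => dist x (γ t) - dist b (γ t)) (atTop ⊓ 𝓟 T) (𝓝 (ξ x))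

/-- The combination `[ξ₁, ξ₂, c](x₁,x₂) = max(ξ₁(x₁) + c ∧ 0, ξ₂(x₂) - c ∨ 0)`, with the
degenerate term dropped when `c = ±∞`. -/
noncomputable def comboFn {X₁ X₂ : Type*} (ξ₁ : X₁ → ℝ) (ξ₂ : X₂ → ℝ) (c : EReal) :
    X₁ × X₂ → ℝ :=
  if c = ⊤ then fun p => ξ₁ p.1
  else if c = ⊥ then fun p => ξ₂ p.2
  else fun p => max (ξ₁ p.1 + min c.toReal 0) (ξ₂ p.2 - max c.toReal 0)

lemma horo_zero {X : Type*} [MetricSpace X] {b : X} {ξ : X → ℝ}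
    (h : IsHorofunction b ξ) : ξ b = 0 := by
  obtain ⟨z, -, hz⟩ := h
  have h1 : Tendsto (fun _ : ℕ => (0:ℝ)) atTop (𝓝 (ξ b)) := by
    simpa [sub_self] using hz b
  exact (tendsto_nhds_unique tendsto_const_nhds h1).symm

lemma not_bddAbove_Ici_zero : ¬ BddAbove (Ici (0:ℝ)) := by
  rintro ⟨B, hB⟩
  have h1 : max B 0 + 1 ∈ Ici (0:ℝ) := by
    have := le_max_right B 0; simp only [mem_Ici]; linarith
  have := hB h1
  have := le_max_left B 0
  linarith

lemma ag_est {X : Type*} [MetricSpace X] {γ : ℝ → X}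
    (h : IsAlmostGeodesic (Ici 0) γ) {ε : ℝ} (hε : 0 < ε) :
    ∃ N : ℝ, 0 ≤ N ∧ (∀ u, N ≤ u → |dist (γ 0) (γ u) - u| < ε) ∧
      (∀ u v, N ≤ u → u ≤ v → |dist (γ u) (γ v) - (v - u)| < 2*ε) := by
  obtain ⟨-, -, -, hmain⟩ := h
  obtain ⟨N₀, hN⟩ := hmain ε hε
  have key : ∀ u, max N₀ 0 ≤ u → |dist (γ 0) (γ u) - u| < ε := by
    intro u hu
    have hu0 : (0:ℝ) ≤ u := le_trans (le_max_right _ _) hu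
    have := hN u hu0 u hu0 (le_trans (le_max_left _ _) hu) le_rfl
    simpa [dist_self] using this
  refine ⟨max N₀ 0, le_max_right _ _, key, ?_⟩
  intro u v hu huv
  have hu0 : (0:ℝ) ≤ u := le_trans (le_max_right _ _) hu
  have hv0 : (0:ℝ) ≤ v := le_trans hu0 huv
  have h1 := abs_lt.1 (hN u hu0 v hv0 (le_trans (le_max_left _ _) hu) huv)
  have h2 := abs_lt.1 (key u hu)
  rw [abs_lt]
  constructor <;> [linarith; linarith]

lemma horo_of_ag {X : Type*} [MetricSpace X] (b : X) (ξ : X → ℝ) (T : Set ℝ) (γ : ℝ → X)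
    (hAG : IsAlmostGeodesic T γ)
    (hconv : ∀ x, Tendsto (fun t => dist x (γ t) - dist b (γ t)) (atTop ⊓ 𝓟 T) (𝓝 (ξ x))) :
    IsHorofunction b ξ := by
  obtain ⟨h0, hpos, hunb, hmain⟩ := hAG
  have H : ∀ n : ℕ, ∃ y, y ∈ T ∧ (n:ℝ) ≤ y := by
    intro n
    obtain ⟨y, hy1, hy2⟩ := not_bddAbove_iff.1 hunb n
    exact ⟨y, hy1, hy2.le⟩
  choose w hw1 hw2 using H
  have hwt : Tendsto w atTop (atTop ⊓ 𝓟 T) :=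
    tendsto_inf.2 ⟨tendsto_atTop_mono hw2 tendsto_natCast_atTop_atTop,
      tendsto_principal.2 (Eventually.of_forall hw1)⟩
  refine ⟨fun n => γ (w n), ?_, fun x => (hconv x).comp hwt⟩
  obtain ⟨N, hN⟩ := hmain 1 one_pos
  have key : ∀ n : ℕ, N ≤ w n → w n - 1 - dist (γ 0) b ≤ dist b (γ (w n)) := by
    intro n hn
    have h1 := hN (w n) (hw1 n) (w n) (hw1 n) hn le_rfl
    rw [dist_self, add_zero] at h1
    have h2 := abs_lt.1 h1
    have h3 := dist_triangle (γ 0) b (γ (w n))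
    linarith
  apply tendsto_atTop_mono' atTop
    (show (fun n : ℕ => (n:ℝ) - 1 - dist (γ 0) b) ≤ᶠ[atTop] fun n => dist b (γ (w n)) from ?_)
  · exact tendsto_atTop_add_const_right _ _
      (tendsto_atTop_add_const_right _ _ tendsto_natCast_atTop_atTop)
  · filter_upwards [tendsto_natCast_atTop_atTop.eventually_ge_atTop N] with n hn
    have := key n (le_trans hn (hw2 n))
    have := hw2 n
    linarith

lemma interp {X : Type*} [MetricSpace X] (hgeo : GeodesicSpace X) (b : X) (ξ : X → ℝ)
    (T : Set ℝ) (γ : ℝ → X) (hAG : IsAlmostGeodesic T γ)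
    (hconv : ∀ x, Tendsto (fun t => dist x (γ t) - dist b (γ t)) (atTop ⊓ 𝓟 T) (𝓝 (ξ x))) :
    ∃ δ : ℝ → X, ∃ r : ℝ, IsAlmostGeodesic (Ici 0) δ ∧
      (∀ x, Tendsto (fun u => dist x (δ u) - dist b (δ u)) atTop (𝓝 (ξ x))) ∧
      Tendsto (fun u => dist b (δ u) - u) atTop (𝓝 r) := by
  obtain ⟨h0T, hTpos, hTunb, hmain⟩ := hAG
  have hnext : ∀ x : ℝ, ∃ y, y ∈ T ∧ x + 1 ≤ y := by
    intro x
    obtain ⟨y, hy1, hy2⟩ := not_bddAbove_iff.1 hTunb (x+1)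
    exact ⟨y, hy1, hy2.le⟩
  choose f hf1 hf2 using hnext
  obtain ⟨t, ht0, htsucc⟩ : ∃ t : ℕ → ℝ, t 0 = 0 ∧ ∀ n, t (n+1) = f (t n) :=
    ⟨fun n => Nat.rec 0 (fun _ ih => f ih) n, rfl, fun _ => rfl⟩
  have htmem : ∀ n, t n ∈ T := by
    intro n
    cases n with
    | zero => rw [ht0]; exact h0T
    | succ k => rw [htsucc]; exact hf1 _
  have htstep : ∀ n, t n + 1 ≤ t (n+1) := by intro n; rw [htsucc]; exact hf2 _
  have hmono : StrictMono t := strictMono_nat_of_lt_succ (fun n => by have := htstep n; linarith)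
  have htge : ∀ n : ℕ, (n:ℝ) ≤ t n := by
    intro n
    induction n with
    | zero => simp [ht0]
    | succ k ih => have := htstep k; push_cast; linarith
  have htnonneg : ∀ n, 0 ≤ t n := fun n => mem_Ici.1 (hTpos (htmem n))
  obtain ⟨D, hD⟩ : ∃ D : ℕ → ℝ, D = fun n => dist (γ (t n)) (γ (t (n+1))) := ⟨_, rfl⟩
  have hDval : ∀ n, D n = dist (γ (t n)) (γ (t (n+1))) := fun n => by rw [hD]
  have hD0 : ∀ n, 0 ≤ D n := fun n => by rw [hDval]; exact dist_nonneg
  have hΔ : ∀ n, (1:ℝ) ≤ t (n+1) - t n := fun n => by have := htstep n; linarith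
  have hgeo' : ∀ n, ∃ g : ℝ → X, g 0 = γ (t n) ∧ g (D n) = γ (t (n+1)) ∧
      ∀ s ∈ Icc (0:ℝ) (D n), ∀ v ∈ Icc (0:ℝ) (D n), dist (g s) (g v) = |s - v| := by
    intro n; rw [hDval]; exact hgeo _ _
  choose g hg0 hg1 hgiso using hgeo'
  have hex : ∀ u : ℝ, ∃ n, u < t (n+1) := by
    intro u
    refine ⟨⌈u⌉₊, lt_of_le_of_lt (Nat.le_ceil u) ?_⟩
    have h1 := htge (⌈u⌉₊ + 1)
    push_cast at h1
    linarith
  obtain ⟨δ, hδdef⟩ : ∃ δ : ℝ → X, δ = fun u =>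
      g (Nat.find (hex u)) ((u - t (Nat.find (hex u))) * D (Nat.find (hex u)) /
        (t (Nat.find (hex u) + 1) - t (Nat.find (hex u)))) := ⟨_, rfl⟩
  have hfind_eq : ∀ n u, t n ≤ u → u < t (n+1) → Nat.find (hex u) = n := by
    intro n u h1 h2
    refine le_antisymm (Nat.find_min' _ h2) ((Nat.le_find_iff _ _).2 ?_)
    intro m hm
    push_neg
    exact le_trans (hmono.monotone (by omega : m + 1 ≤ n)) h1
  have hval : ∀ n u, t n ≤ u → u ≤ t (n+1) →
      δ u = g n ((u - t n) * D n / (t (n+1) - t n)) := by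
    intro n u h1 h2
    rcases lt_or_eq_of_le h2 with h2' | h2'
    · simp only [hδdef]; rw [hfind_eq n u h1 h2']
    · subst h2'
      have hne : t (n+1) - t n ≠ 0 := by have := hΔ n; linarith
      have hfe : Nat.find (hex (t (n+1))) = n + 1 :=
        hfind_eq (n+1) (t (n+1)) le_rfl (hmono (by omega))
      simp only [hδdef]; rw [hfe]
      rw [sub_self, zero_mul, zero_div, hg0]
      rw [show (t (n+1) - t n) * D n / (t (n+1) - t n) = D n from by field_simp]
      rw [hg1]
  have hparam : ∀ n u, t n ≤ u → u ≤ t (n+1) →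
      (u - t n) * D n / (t (n+1) - t n) ∈ Icc (0:ℝ) (D n) := by
    intro n u h1 h2
    have hΔn := hΔ n
    constructor
    · exact div_nonneg (mul_nonneg (by linarith) (hD0 n)) (by linarith)
    · rw [div_le_iff₀ (by linarith)]
      nlinarith [mul_le_mul_of_nonneg_right (show u - t n ≤ t (n+1) - t n from by linarith) (hD0 n)]
  have hdist_seg : ∀ n u v, t n ≤ u → u ≤ v → v ≤ t (n+1) →
      dist (δ u) (δ v) = (v - u) * D n / (t (n+1) - t n) := by
    intro n u v h1 h2 h3
    rw [hval n u h1 (le_trans h2 h3), hval n v (le_trans h1 h2) h3]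
    rw [hgiso n _ (hparam n u h1 (le_trans h2 h3)) _ (hparam n v (le_trans h1 h2) h3)]
    have hΔn := hΔ n
    rw [show (u - t n) * D n / (t (n+1) - t n) - (v - t n) * D n / (t (n+1) - t n)
        = -((v - u) * D n / (t (n+1) - t n)) from by ring, abs_neg]
    exact abs_of_nonneg (div_nonneg (mul_nonneg (by linarith) (hD0 n)) (by linarith))
  have hδt : ∀ n, δ (t n) = γ (t n) := by
    intro n
    rw [hval n (t n) le_rfl (hmono (Nat.lt_succ_self n)).le]
    rw [sub_self, zero_mul, zero_div, hg0]
  have hδ0 : δ 0 = γ 0 := by have := hδt 0; rw [ht0] at this; exact this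
  have herr : ∀ n u v, t n ≤ u → u ≤ v → v ≤ t (n+1) →
      |dist (δ u) (δ v) - (v - u)| ≤ |D n - (t (n+1) - t n)| := by
    intro n u v h1 h2 h3
    rw [hdist_seg n u v h1 h2 h3]
    have hΔn := hΔ n
    have hne : t (n+1) - t n ≠ 0 := by linarith
    have e : (v - u) * D n / (t (n+1) - t n) - (v - u)
        = ((v - u) / (t (n+1) - t n)) * (D n - (t (n+1) - t n)) := by
      field_simp
    rw [e, abs_mul]
    have hb1 : |(v - u) / (t (n+1) - t n)| ≤ 1 := by
      rw [abs_of_nonneg (div_nonneg (by linarith) (by linarith))]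
      rw [div_le_one (by linarith)]
      linarith
    calc |(v - u) / (t (n+1) - t n)| * |D n - (t (n+1) - t n)|
        ≤ 1 * |D n - (t (n+1) - t n)| := mul_le_mul_of_nonneg_right hb1 (abs_nonneg _)
      _ = _ := one_mul _
  have key : ∀ ε : ℝ, 0 < ε → ∃ K : ℕ,
      (∀ m n, K ≤ m → m ≤ n → |dist (γ (t m)) (γ (t n)) - (t n - t m)| ≤ 2*ε) ∧
      (∀ n, K ≤ n → |dist (γ 0) (γ (t n)) - t n| ≤ ε) := by
    intro ε hε
    obtain ⟨N, hN⟩ := hmain ε hε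
    have htN : ∀ n : ℕ, ⌈max N 0⌉₊ ≤ n → N ≤ t n := by
      intro n hn
      have h1 : (max N 0 : ℝ) ≤ ((⌈max N 0⌉₊ : ℕ) : ℝ) := Nat.le_ceil _
      have h2 : ((⌈max N 0⌉₊ : ℕ) : ℝ) ≤ (n : ℝ) := Nat.cast_le.2 hn
      have h3 := htge n
      have h4 := le_max_left N 0
      linarith
    have F3 : ∀ n, ⌈max N 0⌉₊ ≤ n → |dist (γ 0) (γ (t n)) - t n| ≤ ε := by
      intro n hn
      have h := hN (t n) (htmem n) (t n) (htmem n) (htN n hn) le_rfl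
      rw [dist_self, add_zero] at h
      exact h.le
    refine ⟨⌈max N 0⌉₊, ?_, F3⟩
    intro m n hm hmn
    have h := hN (t m) (htmem m) (t n) (htmem n) (htN m hm) (hmono.monotone hmn)
    have h3 := abs_le.1 (F3 m hm)
    have h4 := abs_lt.1 h
    rw [abs_le]
    constructor <;> linarith
  have hKseg : ∀ (K : ℕ) (u : ℝ), t K ≤ u → ∃ n, K ≤ n ∧ t n ≤ u ∧ u ≤ t (n+1) := by
    intro K u hu
    have hu0 : (0:ℝ) ≤ u := le_trans (htnonneg K) hu
    refine ⟨Nat.find (hex u), ?_, ?_, (Nat.find_spec (hex u)).le⟩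
    · by_contra hcon
      push_neg at hcon
      have h5 : t (Nat.find (hex u) + 1) ≤ t K := hmono.monotone (by omega)
      have h6 := Nat.find_spec (hex u)
      linarith
    · rcases Nat.eq_zero_or_pos (Nat.find (hex u)) with h | h
      · rw [h, ht0]; exact hu0
      · obtain ⟨k, hk⟩ : ∃ k, Nat.find (hex u) = k + 1 := ⟨Nat.find (hex u) - 1, by omega⟩
        have h7 := Nat.find_min (hex u) (show k < Nat.find (hex u) from by omega)
        push_neg at h7
        rw [hk]; exact h7
  have G1 : ∀ ε : ℝ, 0 < ε → ∃ M : ℝ, ∀ u, M ≤ u → |dist (γ 0) (δ u) - u| ≤ 3*ε := by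
    intro ε hε
    obtain ⟨K, F2, F3⟩ := key ε hε
    refine ⟨t K, fun u hu => ?_⟩
    obtain ⟨m, hKm, hmu, hum⟩ := hKseg K u hu
    have eD : |D m - (t (m+1) - t m)| ≤ 2*ε := by
      rw [hDval]; exact F2 m (m+1) hKm (by omega)
    have e2 : |dist (γ (t m)) (δ u) - (u - t m)| ≤ |D m - (t (m+1) - t m)| := by
      have h := herr m (t m) u le_rfl hmu hum
      rwa [hδt m] at h
    have e3 : |dist (δ u) (γ (t (m+1))) - (t (m+1) - u)| ≤ |D m - (t (m+1) - t m)| := by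
      have h := herr m u (t (m+1)) hmu hum le_rfl
      rwa [hδt (m+1)] at h
    have f1 := abs_le.1 (F3 m hKm)
    have f2 := abs_le.1 (F3 (m+1) (by omega))
    have a2 := abs_le.1 (le_trans e2 eD)
    have a3 := abs_le.1 (le_trans e3 eD)
    have tri1 := dist_triangle (γ 0) (γ (t m)) (δ u)
    have tri2 := dist_triangle (γ 0) (δ u) (γ (t (m+1)))
    rw [abs_le]
    constructor <;> linarith
  have G2 : ∀ ε : ℝ, 0 < ε → ∃ M : ℝ, ∀ u v, M ≤ u → u ≤ v →
      |dist (δ u) (δ v) - (v - u)| ≤ 6*ε := by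
    intro ε hε
    obtain ⟨K, F2, F3⟩ := key ε hε
    refine ⟨t K, fun u v hu huv => ?_⟩
    obtain ⟨m, hKm, hmu, hum⟩ := hKseg K u hu
    obtain ⟨n, hKn, hnv, hvn⟩ := hKseg K v (le_trans hu huv)
    rcases lt_trichotomy m n with hmn | hmn | hmn
    · have eDm : |D m - (t (m+1) - t m)| ≤ 2*ε := by
        rw [hDval]; exact F2 m (m+1) hKm (by omega)
      have eDn : |D n - (t (n+1) - t n)| ≤ 2*ε := by
        rw [hDval]; exact F2 n (n+1) hKn (by omega)
      have e1 : |dist (δ u) (γ (t (m+1))) - (t (m+1) - u)| ≤ 2*ε := by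
        refine le_trans ?_ eDm
        have h := herr m u (t (m+1)) hmu hum le_rfl
        rwa [hδt (m+1)] at h
      have e2 : |dist (γ (t (m+1))) (γ (t n)) - (t n - t (m+1))| ≤ 2*ε :=
        F2 (m+1) n (by omega) (by omega)
      have e3 : |dist (γ (t n)) (δ v) - (v - t n)| ≤ 2*ε := by
        refine le_trans ?_ eDn
        have h := herr n (t n) v le_rfl hnv hvn
        rwa [hδt n] at h
      have e4 : |dist (γ (t m)) (γ (t (n+1))) - (t (n+1) - t m)| ≤ 2*ε :=
        F2 m (n+1) hKm (by omega)
      have e5 : |dist (γ (t m)) (δ u) - (u - t m)| ≤ 2*ε := by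
        refine le_trans ?_ eDm
        have h := herr m (t m) u le_rfl hmu hum
        rwa [hδt m] at h
      have e6 : |dist (δ v) (γ (t (n+1))) - (t (n+1) - v)| ≤ 2*ε := by
        refine le_trans ?_ eDn
        have h := herr n v (t (n+1)) hnv hvn le_rfl
        rwa [hδt (n+1)] at h
      have tu1 := dist_triangle (δ u) (γ (t (m+1))) (δ v)
      have tu2 := dist_triangle (γ (t (m+1))) (γ (t n)) (δ v)
      have tl1 := dist_triangle (γ (t m)) (δ u) (γ (t (n+1)))
      have tl2 := dist_triangle (δ u) (δ v) (γ (t (n+1)))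
      have a1 := abs_le.1 e1; have a2 := abs_le.1 e2; have a3 := abs_le.1 e3
      have a4 := abs_le.1 e4; have a5 := abs_le.1 e5; have a6 := abs_le.1 e6
      rw [abs_le]; constructor <;> linarith
    · subst hmn
      have eDm : |D m - (t (m+1) - t m)| ≤ 2*ε := by
        rw [hDval]; exact F2 m (m+1) hKm (by omega)
      have h := le_trans (herr m u v hmu huv hvn) eDm
      calc |dist (δ u) (δ v) - (v - u)| ≤ 2*ε := h
        _ ≤ 6*ε := by linarith
    · have h5 : t (n+1) ≤ t m := hmono.monotone (by omega)
      have huv' : u = v := le_antisymm huv (by linarith)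
      subst huv'
      simp only [dist_self, sub_self, sub_zero, abs_zero]
      positivity
  have hAGd : IsAlmostGeodesic (Ici 0) δ := by
    refine ⟨mem_Ici.2 le_rfl, fun x hx => hx, not_bddAbove_Ici_zero, ?_⟩
    intro ε hε
    obtain ⟨M₁, hM₁⟩ := G1 (ε/10) (by linarith)
    obtain ⟨M₂, hM₂⟩ := G2 (ε/10) (by linarith)
    refine ⟨max M₁ M₂, ?_⟩
    intro s _ u _ hNs hsu
    have b1 := abs_le.1 (hM₁ s (le_trans (le_max_left _ _) hNs))
    have b2 := abs_le.1 (hM₂ s u (le_trans (le_max_right _ _) hNs) hsu)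
    rw [hδ0, abs_lt]
    constructor <;> linarith
  have hseq : Tendsto t atTop (atTop ⊓ 𝓟 T) :=
    tendsto_inf.2 ⟨tendsto_atTop_mono htge tendsto_natCast_atTop_atTop,
      tendsto_principal.2 (Eventually.of_forall htmem)⟩
  have hplim : ∀ x, Tendsto (fun n => dist x (γ (t n)) - dist b (γ (t n))) atTop (𝓝 (ξ x)) :=
    fun x => (hconv x).comp hseq
  have h0lim : Tendsto (fun n => dist (γ 0) (γ (t n)) - t n) atTop (𝓝 0) := by
    rw [Metric.tendsto_atTop]
    intro ε hε
    obtain ⟨K, F2, F3⟩ := key (ε/2) (by linarith)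
    refine ⟨K, fun n hn => ?_⟩
    rw [Real.dist_eq, sub_zero]
    exact lt_of_le_of_lt (F3 n hn) (by linarith)
  have hblim : Tendsto (fun n => dist b (γ (t n)) - t n) atTop (𝓝 (-ξ (γ 0))) := by
    have h := h0lim.sub (hplim (γ 0))
    rw [zero_sub] at h
    exact h.congr (fun n => by ring)
  have hconv' : ∀ x, Tendsto (fun u => dist x (δ u) - dist b (δ u)) atTop (𝓝 (ξ x)) := by
    intro x
    rw [Metric.tendsto_atTop]
    intro ε hε
    have hε6 : (0:ℝ) < ε/6 := by linarith
    obtain ⟨K₁, hK₁⟩ := (Metric.tendsto_atTop.1 (hplim x)) (ε/6) hε6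
    obtain ⟨K₂, hK₂⟩ := (Metric.tendsto_atTop.1 hblim) (ε/6) hε6
    obtain ⟨K₃, F2, F3⟩ := key (ε/6) hε6
    refine ⟨t (max (max K₁ K₂) K₃), fun u hu => ?_⟩
    obtain ⟨m, hKm, hmu, hum⟩ := hKseg (max (max K₁ K₂) K₃) u hu
    have hm1 : K₁ ≤ m := le_trans (le_trans (le_max_left _ _) (le_max_left _ _)) hKm
    have hm2 : K₂ ≤ m := le_trans (le_trans (le_max_right _ _) (le_max_left _ _)) hKm
    have hm3 : K₃ ≤ m := le_trans (le_max_right _ _) hKm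
    have e1 := hK₁ m hm1
    have e1' := hK₁ (m+1) (by omega)
    have e2 := hK₂ m hm2
    have e2' := hK₂ (m+1) (by omega)
    rw [Real.dist_eq] at e1 e1' e2 e2'
    have a1 := abs_lt.1 e1; have a1' := abs_lt.1 e1'
    have a2 := abs_lt.1 e2; have a2' := abs_lt.1 e2'
    have eD := abs_le.1 (show |D m - (t (m+1) - t m)| ≤ 2*(ε/6) from by
      rw [hDval]; exact F2 m (m+1) hm3 (by omega))
    have s1 : dist (γ (t m)) (δ u) + dist (δ u) (γ (t (m+1))) = D m := by
      have h1 := hdist_seg m (t m) u le_rfl hmu hum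
      have h2 := hdist_seg m u (t (m+1)) hmu hum le_rfl
      rw [hδt m] at h1
      rw [hδt (m+1)] at h2
      rw [h1, h2]
      have hne : t (m+1) - t m ≠ 0 := by have := hΔ m; linarith
      field_simp
      ring
    have tri1 := dist_triangle x (γ (t m)) (δ u)
    have tri2 := dist_triangle b (δ u) (γ (t (m+1)))
    have tri3 := dist_triangle x (δ u) (γ (t (m+1)))
    have tri4 := dist_triangle b (γ (t m)) (δ u)
    rw [Real.dist_eq, abs_lt]
    constructor <;> linarith
  have hGfull : Tendsto (fun u => dist (γ 0) (δ u) - u) atTop (𝓝 0) := by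
    rw [Metric.tendsto_atTop]
    intro ε hε
    obtain ⟨M, hM⟩ := G1 (ε/4) (by linarith)
    refine ⟨M, fun u hu => ?_⟩
    rw [Real.dist_eq, sub_zero]
    exact lt_of_le_of_lt (hM u hu) (by linarith)
  refine ⟨δ, -ξ (γ 0), hAGd, hconv', ?_⟩
  have h := hGfull.sub (hconv' (γ 0))
  rw [zero_sub] at h
  exact h.congr (fun u => by ring)

lemma isBusemann_swap {X₁ X₂ : Type*} [MetricSpace X₁] [MetricSpace X₂]
    (b₁ : X₁) (b₂ : X₂) (ξ : X₁ × X₂ → ℝ)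
    (h : IsBusemann (b₁, b₂) ξ) :
    IsBusemann (X := X₂ × X₁) (b₂, b₁) (fun p => ξ (p.2, p.1)) := by
  have hd : ∀ (x : X₂ × X₁) (q : X₁ × X₂), dist x (q.2, q.1) = dist ((x.2, x.1) : X₁ × X₂) q := by
    intro x q
    rw [Prod.dist_eq, Prod.dist_eq]
    exact max_comm _ _
  obtain ⟨⟨z, hz1, hz2⟩, T, γ, ⟨hA1, hA2, hA3, hA4⟩, hconv⟩ := h
  refine ⟨⟨fun n => ((z n).2, (z n).1), ?_, ?_⟩, T, fun u => ((γ u).2, (γ u).1),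
    ⟨hA1, hA2, hA3, ?_⟩, ?_⟩
  · simpa [hd] using hz1
  · intro x
    simpa [hd] using hz2 (x.2, x.1)
  · intro ε hε
    obtain ⟨N, hN⟩ := hA4 ε hε
    exact ⟨N, fun s hs u hu h1 h2 => by simpa [hd] using hN s hs u hu h1 h2⟩
  · intro x
    simpa [hd] using hconv (x.2, x.1)

lemma busemann_dominant {X₁ X₂ : Type*} [MetricSpace X₁] [MetricSpace X₂]
    (b₁ : X₁) (b₂ : X₂) (ξ₁ : X₁ → ℝ) (δ₁ : ℝ → X₁) (δ₂ : ℝ → X₂) (r₁ r₂ : ℝ)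
    (hAG₁ : IsAlmostGeodesic (Ici 0) δ₁) (hAG₂ : IsAlmostGeodesic (Ici 0) δ₂)
    (hc₁ : ∀ x, Tendsto (fun u => dist x (δ₁ u) - dist b₁ (δ₁ u)) atTop (𝓝 (ξ₁ x)))
    (hb₁ : Tendsto (fun u => dist b₁ (δ₁ u) - u) atTop (𝓝 r₁))
    (hb₂ : Tendsto (fun u => dist b₂ (δ₂ u) - u) atTop (𝓝 r₂))
    (hξb : ξ₁ b₁ = 0) :
    IsBusemann (X := X₁ × X₂) (b₁, b₂) (fun p => ξ₁ p.1) := by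
  obtain ⟨γp, hγp⟩ : ∃ f : ℝ → X₁ × X₂, f = fun u => (δ₁ u, δ₂ (u / 2)) := ⟨_, rfl⟩
  have hhalf : Tendsto (fun u : ℝ => u / 2) atTop atTop := tendsto_id.atTop_div_const two_pos
  have hAGp : IsAlmostGeodesic (Ici 0) γp := by
    refine ⟨mem_Ici.2 le_rfl, fun x hx => hx, not_bddAbove_Ici_zero, ?_⟩
    intro ε hε
    obtain ⟨N₁, hN₁0, hA₁, hB₁⟩ := ag_est hAG₁ (show (0:ℝ) < ε/4 by linarith)
    obtain ⟨N₂, hN₂0, hA₂, hB₂⟩ := ag_est hAG₂ (show (0:ℝ) < ε/4 by linarith)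
    refine ⟨max N₁ (2*N₂), ?_⟩
    intro s hs u hu hNs hsu
    have hs0 : (0:ℝ) ≤ s := hs
    have hN1s : N₁ ≤ s := le_trans (le_max_left _ _) hNs
    have hN2s : N₂ ≤ s/2 := by
      have := le_trans (le_max_right _ _) hNs; linarith
    have c₁ := abs_lt.1 (hA₁ s hN1s)
    have c₂ := abs_lt.1 (hA₂ (s/2) hN2s)
    have d₁ := abs_lt.1 (hB₁ s u hN1s hsu)
    have d₂ := abs_lt.1 (hB₂ (s/2) (u/2) hN2s (by linarith))
    have e0 : dist (γp 0) (γp s) = max (dist (δ₁ 0) (δ₁ s)) (dist (δ₂ 0) (δ₂ (s/2))) := by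
      simp [hγp, Prod.dist_eq]
    have e1 : dist (γp s) (γp u) = max (dist (δ₁ s) (δ₁ u)) (dist (δ₂ (s/2)) (δ₂ (u/2))) := by
      simp [hγp, Prod.dist_eq]
    have hup0 : dist (γp 0) (γp s) < s + ε/4 := by
      rw [e0]; exact max_lt (by linarith [c₁.2]) (by linarith [c₂.2])
    have hlo0 : s - ε/4 < dist (γp 0) (γp s) := by
      rw [e0]; exact lt_max_iff.2 (Or.inl (by linarith [c₁.1]))
    have hup1 : dist (γp s) (γp u) < (u - s) + 2*(ε/4) := by
      rw [e1]; exact max_lt (by linarith [d₁.2]) (by linarith [d₂.2])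
    have hlo1 : (u - s) - 2*(ε/4) < dist (γp s) (γp u) := by
      rw [e1]; exact lt_max_iff.2 (Or.inl (by linarith [d₁.1]))
    rw [abs_lt]
    constructor <;> linarith
  have h2 : ∀ y₂ : X₂, Tendsto (fun u => dist y₂ (δ₂ (u/2)) - u) atTop atBot := by
    intro y₂
    have hb2' : Tendsto (fun u : ℝ => dist b₂ (δ₂ (u/2)) - u/2) atTop (𝓝 r₂) := hb₂.comp hhalf
    apply tendsto_atBot_mono' atTop
      (show (fun u => dist y₂ (δ₂ (u/2)) - u) ≤ᶠ[atTop]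
        (fun u : ℝ => dist y₂ b₂ + r₂ + 1 + -(u/2)) from ?_)
    · exact tendsto_atBot_add_const_left _ _ (tendsto_neg_atTop_atBot.comp hhalf)
    · filter_upwards [hb2'.eventually (eventually_le_nhds (lt_add_one r₂))] with u hu
      have tri := dist_triangle y₂ b₂ (δ₂ (u/2))
      linarith
  have key : ∀ (y₁ : X₁) (y₂ : X₂),
      Tendsto (fun u => dist ((y₁, y₂) : X₁ × X₂) (γp u) - u) atTop (𝓝 (ξ₁ y₁ + r₁)) := by
    intro y₁ y₂
    have k₁ : Tendsto (fun u => dist y₁ (δ₁ u) - u) atTop (𝓝 (ξ₁ y₁ + r₁)) :=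
      ((hc₁ y₁).add hb₁).congr (fun u => by ring)
    refine k₁.congr' ?_
    have E1 := (h2 y₂).eventually_le_atBot (ξ₁ y₁ + r₁ - 1)
    have E2 := k₁.eventually (eventually_ge_nhds
      (show ξ₁ y₁ + r₁ - 1 < ξ₁ y₁ + r₁ by linarith))
    filter_upwards [E1, E2] with u e1 e2
    have hmax : dist ((y₁, y₂) : X₁ × X₂) (γp u) = dist y₁ (δ₁ u) := by
      rw [hγp, Prod.dist_eq]
      exact max_eq_left (by linarith)
    rw [hmax]
  have hconvp : ∀ x : X₁ × X₂, Tendsto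
      (fun u => dist x (γp u) - dist ((b₁, b₂) : X₁ × X₂) (γp u)) (atTop ⊓ 𝓟 (Ici 0))
      (𝓝 (ξ₁ x.1)) := by
    intro x
    have hx := key x.1 x.2
    rw [Prod.mk.eta] at hx
    have h : Tendsto (fun u => dist x (γp u) - dist ((b₁, b₂) : X₁ × X₂) (γp u)) atTop
        (𝓝 ((ξ₁ x.1 + r₁) - (ξ₁ b₁ + r₁))) := (hx.sub (key b₁ b₂)).congr (fun u => by ring)
    have hv : (ξ₁ x.1 + r₁) - (ξ₁ b₁ + r₁) = ξ₁ x.1 := by rw [hξb]; ring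
    rw [hv] at h
    exact h.mono_left inf_le_left
  exact ⟨horo_of_ag _ _ _ _ hAGp hconvp, Ici 0, γp, hAGp, hconvp⟩

/-- For Busemann points `ξ₁` of `X₁` and `ξ₂` of `X₂` and any `c ∈ [-∞,+∞]`, the function
`[ξ₁,ξ₂,c]` is a Busemann point of the `ℓ∞`-product `X₁ × X₂` (whose product metric is
`dist (p,q) = max (dist p₁ q₁) (dist p₂ q₂)`). -/
theorem combo_is_busemann_of_product
    {X₁ X₂ : Type*} [MetricSpace X₁] [MetricSpace X₂]
    [ProperSpace X₁] [ProperSpace X₂]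
    (hgeo₁ : GeodesicSpace X₁) (hgeo₂ : GeodesicSpace X₂)
    (b₁ : X₁) (b₂ : X₂) (ξ₁ : X₁ → ℝ) (ξ₂ : X₂ → ℝ)
    (hξ₁ : IsBusemann b₁ ξ₁) (hξ₂ : IsBusemann b₂ ξ₂) (c : EReal) :
    IsBusemann (X := X₁ × X₂) (b₁, b₂) (comboFn ξ₁ ξ₂ c) := by
  obtain ⟨hor₁, T₁, γ₁, hAG₁, hconv₁⟩ := hξ₁
  obtain ⟨hor₂, T₂, γ₂, hAG₂, hconv₂⟩ := hξ₂
  obtain ⟨δ₁, r₁, hAG₁', hc₁, hb₁⟩ := interp hgeo₁ b₁ ξ₁ T₁ γ₁ hAG₁ hconv₁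
  obtain ⟨δ₂, r₂, hAG₂', hc₂, hb₂⟩ := interp hgeo₂ b₂ ξ₂ T₂ γ₂ hAG₂ hconv₂
  have hξ₁b : ξ₁ b₁ = 0 := horo_zero hor₁
  have hξ₂b : ξ₂ b₂ = 0 := horo_zero hor₂
  by_cases hct : c = ⊤
  · subst hct
    have h := busemann_dominant b₁ b₂ ξ₁ δ₁ δ₂ r₁ r₂ hAG₁' hAG₂' hc₁ hb₁ hb₂ hξ₁b
    have he : comboFn ξ₁ ξ₂ ⊤ = fun p : X₁ × X₂ => ξ₁ p.1 := by simp [comboFn]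
    rw [he]; exact h
  by_cases hcb : c = ⊥
  · subst hcb
    have h := busemann_dominant b₂ b₁ ξ₂ δ₂ δ₁ r₂ r₁ hAG₂' hAG₁' hc₂ hb₂ hb₁ hξ₂b
    have h2 := isBusemann_swap b₂ b₁ _ h
    have he : comboFn ξ₁ ξ₂ ⊥ = fun p : X₁ × X₂ => ξ₂ p.2 := by simp [comboFn]
    rw [he]; exact h2
  · obtain ⟨a, ha⟩ : ∃ a : ℝ, a = min c.toReal 0 := ⟨_, rfl⟩
    obtain ⟨mm, hmm⟩ : ∃ mm : ℝ, mm = max c.toReal 0 := ⟨_, rfl⟩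
    obtain ⟨s₀, hs₀⟩ : ∃ s₀ : ℝ, s₀ = -max (a - r₁) (-mm - r₂) := ⟨_, rfl⟩
    obtain ⟨α, hα⟩ : ∃ α : ℝ, α = a + s₀ - r₁ := ⟨_, rfl⟩
    obtain ⟨β, hβ⟩ : ∃ β : ℝ, β = -mm + s₀ - r₂ := ⟨_, rfl⟩
    have hα0 : α ≤ 0 := by rw [hα, hs₀]; linarith [le_max_left (a - r₁) (-mm - r₂)]
    have hβ0 : β ≤ 0 := by rw [hβ, hs₀]; linarith [le_max_right (a - r₁) (-mm - r₂)]
    have hmaxαβ : max α β = 0 := by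
      rw [hα, hβ, hs₀,
        show a + -max (a - r₁) (-mm - r₂) - r₁ = (a - r₁) + -max (a - r₁) (-mm - r₂) from by ring,
        show -mm + -max (a - r₁) (-mm - r₂) - r₂ = (-mm - r₂) + -max (a - r₁) (-mm - r₂) from by
          ring,
        max_add_add_right]
      ring
    have hm0 : max a (-mm) = 0 := by
      rw [ha, hmm]
      rcases le_total c.toReal 0 with h | h
      · rw [min_eq_left h, max_eq_right h, neg_zero]
        exact max_eq_right h
      · rw [min_eq_right h, max_eq_left h]
        exact max_eq_left (neg_nonpos.2 h)
    obtain ⟨γp, hγpdef⟩ : ∃ fp : ℝ → X₁ × X₂,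
        fp = fun u => if u ≤ 0 then (δ₁ 0, δ₂ 0) else (δ₁ (u + α), δ₂ (u + β)) := ⟨_, rfl⟩
    obtain ⟨M, hMdef⟩ : ∃ M : ℝ, M = 1 + max (-α) (-β) := ⟨_, rfl⟩
    have hM1 : 1 ≤ M := by
      rw [hMdef]
      have h1 := le_max_left (-α) (-β)
      linarith
    obtain ⟨Tp, hTpdef⟩ : ∃ Tp : Set ℝ, Tp = insert (0:ℝ) (Ici M) := ⟨_, rfl⟩
    have hγp0 : γp 0 = (δ₁ 0, δ₂ 0) := by rw [hγpdef]; simp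
    have hγppos : ∀ u : ℝ, 0 < u → γp u = (δ₁ (u + α), δ₂ (u + β)) := by
      intro u hu; rw [hγpdef]; simp [not_le.2 hu]
    have hAGp : IsAlmostGeodesic Tp γp := by
      rw [hTpdef]
      refine ⟨mem_insert _ _, ?_, ?_, ?_⟩
      · rintro x (rfl | hx)
        · exact mem_Ici.2 le_rfl
        · exact le_trans (show (0:ℝ) ≤ M by linarith) hx
      · rintro ⟨B, hB⟩
        have h1 : max B M + 1 ∈ insert (0:ℝ) (Ici M) :=
          Or.inr (by simp only [mem_Ici]; linarith [le_max_right B M])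
        have h2 := hB h1
        linarith [le_max_left B M]
      · intro ε hε
        obtain ⟨N₁, hN₁0, hA₁, hB₁⟩ := ag_est hAG₁' (show (0:ℝ) < ε/4 by linarith)
        obtain ⟨N₂, hN₂0, hA₂, hB₂⟩ := ag_est hAG₂' (show (0:ℝ) < ε/4 by linarith)
        refine ⟨max (max (N₁ - α) (N₂ - β)) 1, ?_⟩
        intro s hsT u huT hNs hsu
        have hs1 : (1:ℝ) ≤ s := le_trans (le_max_right _ _) hNs
        have hu1 : (1:ℝ) ≤ u := le_trans hs1 hsu
        have hsM : M ≤ s := by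
          rcases hsT with rfl | h
          · linarith
          · exact h
        have hsα : N₁ ≤ s + α := by
          have := le_trans (le_trans (le_max_left _ _) (le_max_left _ _)) hNs; linarith
        have hsβ : N₂ ≤ s + β := by
          have := le_trans (le_trans (le_max_right _ _) (le_max_left _ _)) hNs; linarith
        have hγps : γp s = (δ₁ (s + α), δ₂ (s + β)) := hγppos s (by linarith)
        have hγpu : γp u = (δ₁ (u + α), δ₂ (u + β)) := hγppos u (by linarith)
        have e0 : dist (γp 0) (γp s)
            = max (dist (δ₁ 0) (δ₁ (s + α))) (dist (δ₂ 0) (δ₂ (s + β))) := by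
          rw [hγp0, hγps, Prod.dist_eq]
        have e1 : dist (γp s) (γp u)
            = max (dist (δ₁ (s+α)) (δ₁ (u+α))) (dist (δ₂ (s+β)) (δ₂ (u+β))) := by
          rw [hγps, hγpu, Prod.dist_eq]
        have c₁ := abs_lt.1 (hA₁ (s+α) hsα)
        have c₂ := abs_lt.1 (hA₂ (s+β) hsβ)
        have d₁ := abs_lt.1 (hB₁ (s+α) (u+α) hsα (by linarith))
        have d₂ := abs_lt.1 (hB₂ (s+β) (u+β) hsβ (by linarith))
        have hαβ : α = 0 ∨ β = 0 := by
          rcases max_choice α β with h | h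
          · exact Or.inl (by rw [← h, hmaxαβ])
          · exact Or.inr (by rw [← h, hmaxαβ])
        have hup0 : dist (γp 0) (γp s) < s + ε/4 := by
          rw [e0]; exact max_lt (by linarith [c₁.2]) (by linarith [c₂.2])
        have hlo0 : s - ε/4 < dist (γp 0) (γp s) := by
          rw [e0]
          rcases hαβ with h | h
          · exact lt_max_iff.2 (Or.inl (by linarith [c₁.1]))
          · exact lt_max_iff.2 (Or.inr (by linarith [c₂.1]))
        have hup1 : dist (γp s) (γp u) < (u - s) + 2*(ε/4) := by
          rw [e1]; exact max_lt (by linarith [d₁.2]) (by linarith [d₂.2])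
        have hlo1 : (u - s) - 2*(ε/4) < dist (γp s) (γp u) := by
          rw [e1]; exact lt_max_iff.2 (Or.inl (by linarith [d₁.1]))
        rw [abs_lt]
        constructor <;> linarith
    have key : ∀ (y₁ : X₁) (y₂ : X₂), Tendsto (fun u => dist ((y₁, y₂) : X₁ × X₂) (γp u) - u)
        atTop (𝓝 (max (ξ₁ y₁ + r₁ + α) (ξ₂ y₂ + r₂ + β))) := by
      intro y₁ y₂
      have k₁ : Tendsto (fun v => dist y₁ (δ₁ v) - v) atTop (𝓝 (ξ₁ y₁ + r₁)) :=
        ((hc₁ y₁).add hb₁).congr (fun v => by ring)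
      have comp₁ : Tendsto (fun u : ℝ => u + α) atTop atTop :=
        tendsto_atTop_add_const_right _ α tendsto_id
      have k₁' : Tendsto (fun u : ℝ => dist y₁ (δ₁ (u + α)) - u) atTop (𝓝 (ξ₁ y₁ + r₁ + α)) :=
        ((k₁.comp comp₁).add_const α).congr (fun u => by simp only [Function.comp]; ring)
      have k₂ : Tendsto (fun v => dist y₂ (δ₂ v) - v) atTop (𝓝 (ξ₂ y₂ + r₂)) :=
        ((hc₂ y₂).add hb₂).congr (fun v => by ring)
      have comp₂ : Tendsto (fun u : ℝ => u + β) atTop atTop :=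
        tendsto_atTop_add_const_right _ β tendsto_id
      have k₂' : Tendsto (fun u : ℝ => dist y₂ (δ₂ (u + β)) - u) atTop (𝓝 (ξ₂ y₂ + r₂ + β)) :=
        ((k₂.comp comp₂).add_const β).congr (fun u => by simp only [Function.comp]; ring)
      refine (k₁'.max k₂').congr' ?_
      filter_upwards [eventually_gt_atTop 0] with u hu
      rw [hγppos u hu, Prod.dist_eq]
      exact max_sub_sub_right _ _ _
    have hconvp : ∀ x : X₁ × X₂, Tendsto
        (fun u => dist x (γp u) - dist ((b₁, b₂) : X₁ × X₂) (γp u)) (atTop ⊓ 𝓟 Tp)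
        (𝓝 (comboFn ξ₁ ξ₂ c x)) := by
      intro x
      have hx := key x.1 x.2
      rw [Prod.mk.eta] at hx
      have h : Tendsto (fun u => dist x (γp u) - dist ((b₁, b₂) : X₁ × X₂) (γp u)) atTop
          (𝓝 (max (ξ₁ x.1 + r₁ + α) (ξ₂ x.2 + r₂ + β)
            - max (ξ₁ b₁ + r₁ + α) (ξ₂ b₂ + r₂ + β))) :=
        (hx.sub (key b₁ b₂)).congr (fun u => by ring)
      have hv : max (ξ₁ x.1 + r₁ + α) (ξ₂ x.2 + r₂ + β)
          - max (ξ₁ b₁ + r₁ + α) (ξ₂ b₂ + r₂ + β) = max (ξ₁ x.1 + a) (ξ₂ x.2 - mm) := by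
        rw [hξ₁b, hξ₂b,
          show ξ₁ x.1 + r₁ + α = (ξ₁ x.1 + a) + s₀ from by rw [hα]; ring,
          show ξ₂ x.2 + r₂ + β = (ξ₂ x.2 - mm) + s₀ from by rw [hβ]; ring,
          show (0:ℝ) + r₁ + α = a + s₀ from by rw [hα]; ring,
          show (0:ℝ) + r₂ + β = -mm + s₀ from by rw [hβ]; ring,
          max_add_add_right, max_add_add_right, hm0]
        ring
      rw [hv] at h
      have hcombo : comboFn ξ₁ ξ₂ c x = max (ξ₁ x.1 + a) (ξ₂ x.2 - mm) := by
        rw [comboFn, if_neg hct, if_neg hcb, ha, hmm]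
      rw [hcombo]
      exact h.mono_left inf_le_left
    exact ⟨horo_of_ag _ _ _ _ hAGp hconvp, Tp, γp, hAGp, hconvp⟩
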